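/- Let γ > 0, 0 ≤ θ < 2π, and let λ ∈ ℝ be a real eigenvalue of the generalized gauge capacitance matrix 𝒞^{θ,γ} with eigenvector v decomposed as in the Chebyshev representation. If λ satisfies the characteristic equation P_N(μ^θ(λ))·P_N(μ^{−θ}(λ)) = e^{γ}·P_{N−1}(μ^θ(λ))·P_{N−1}(μ^{−θ}(λ)) where μ^θ(λ) = (e^{−iθ}λ − α)/(2√(βη)), then |P_N(μ^θ(λ))/P_{N−1}(μ^θ(λ))| = e^{γ/2} (assuming P_{N−1}(μ^θ(λ)) ≠ 0). -/

import Mathlib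

noncomputable def chebUC : ℕ → ℂ → ℂ
  | 0, _ => 1
  | 1, x => 2 * x
  | (n + 2), x => 2 * x * chebUC (n + 1) x - chebUC n x

noncomputable def PgC (γ : ℝ) : ℕ → ℂ → ℂ
  | 0, _ => 1
  | (n + 1), x => chebUC (n + 1) x + (Real.exp (-γ / 2) : ℂ) * chebUC n x

lemma chebUC_conj (n : ℕ) (x : ℂ) :
    chebUC n (starRingEnd ℂ x) = starRingEnd ℂ (chebUC n x) := by
  induction n using Nat.twoStepInduction with
  | zero => simp [chebUC]
  | one => simp [chebUC, map_ofNat]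
  | more n ih1 ih2 => simp [chebUC, ih1, ih2, map_ofNat]

lemma PgC_conj (γ : ℝ) (n : ℕ) (x : ℂ) :
    PgC γ n (starRingEnd ℂ x) = starRingEnd ℂ (PgC γ n x) := by
  cases n with
  | zero => simp [PgC]
  | succ n => simp only [PgC, map_add, map_mul, chebUC_conj, Complex.conj_ofReal]

theorem stmt19 (γ θ lam : ℝ) (hγ : 0 < γ) (N : ℕ) (hN : 1 ≤ N)
    (α β η : ℝ)
    (hα : α = γ * Real.cosh (γ / 2) / Real.sinh (γ / 2))
    (hβ : β = γ / (1 - Real.exp γ))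
    (hη : η = -γ / (1 - Real.exp (-γ)))
    (μθ μmθ : ℂ)
    (hμθ : μθ = (Complex.exp (-(θ : ℂ) * Complex.I) * (lam : ℂ) - (α : ℂ)) /
        (2 * (Real.sqrt (β * η) : ℂ)))
    (hμmθ : μmθ = (Complex.exp ((θ : ℂ) * Complex.I) * (lam : ℂ) - (α : ℂ)) /
        (2 * (Real.sqrt (β * η) : ℂ)))
    (hchar : PgC γ N μθ * PgC γ N μmθ =
        (Real.exp γ : ℂ) * (PgC γ (N - 1) μθ * PgC γ (N - 1) μmθ))
    (hne : PgC γ (N - 1) μθ ≠ 0) :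
    ‖PgC γ N μθ / PgC γ (N - 1) μθ‖ = Real.exp (γ / 2) := by
  have hconj : μmθ = starRingEnd ℂ μθ := by
    rw [hμθ, hμmθ]
    rw [map_div₀, map_sub, map_mul, ← Complex.exp_conj]
    simp [Complex.conj_ofReal, map_ofNat]
  rw [hconj] at hchar
  rw [PgC_conj, PgC_conj, Complex.mul_conj, Complex.mul_conj] at hchar
  have hns : Complex.normSq (PgC γ N μθ) =
      Real.exp γ * Complex.normSq (PgC γ (N - 1) μθ) := by
    exact_mod_cast hchar
  have habs : ‖PgC γ N μθ‖ =
      Real.exp (γ / 2) * ‖PgC γ (N - 1) μθ‖ := by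
    rw [Complex.norm_def, Complex.norm_def, hns, Real.sqrt_mul (Real.exp_nonneg γ)]
    congr 1
    rw [← Real.exp_half]
  rw [norm_div, habs, mul_div_assoc, div_self, mul_one]
  simpa using hne
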